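/- Let Σ be finite, π : Σ* → Σ_o* a projection. Let L_f ⊆ Σ* and let L_ωnf be a set of infinite words over Σ. Suppose: (a) every element of L_ωnf has infinitely many letters in Σ_o after projection (so its projection is an infinite word over Σ_o); (b) π extends to infinite words. Define L_ωf = { u·v | u ∈ L_f, v ∈ Σ_o^ω } (the prefaulty words extended by arbitrary infinite observable suffixes). Then π(L_f) ∩ π(Pref(L_ωnf)) = ∅ if and only if π(L_ωf) ∩ π(L_ωnf) = ∅, where Pref(L_ωnf) denotes the set of finite prefixes of words in L_ωnf. -/

import Mathlib

/-- Erasing projection on finite words. -/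
def proj {A : Type*} (So : Set A) [DecidablePred (· ∈ So)] (w : List A) : List A :=
  w.filter (fun a => decide (a ∈ So))

/-- Erasing projection on infinite words (meaningful when `{n | w n ∈ So}` is infinite). -/
noncomputable def projω {A : Type*} (So : Set A) (w : ℕ → A) : ℕ → A :=
  fun i => w (Nat.nth (fun n => w n ∈ So) i)

/-- Concatenation of a finite word with an infinite word. -/
def catInf {A : Type*} (u : List A) (v : ℕ → A) : ℕ → A :=
  fun n => if h : n < u.length then u.get ⟨n, h⟩ else v (n - u.length)

/-- Finite prefixes of a set of infinite words. -/
def Pref {A : Type*} (L : Set (ℕ → A)) : Set (List A) :=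
  {u | ∃ w ∈ L, ∀ i : Fin u.length, u.get i = w i.val}

section Aux
variable {A : Type*} (So : Set A) [DecidablePred (· ∈ So)] (w : ℕ → A)

/-- Projection of the length-`m` prefix of `w` is the length-`count` prefix of `projω w`. -/
lemma proj_ofFn (m : ℕ) :
    proj So (List.ofFn fun i : Fin m => w i) =
      List.ofFn (fun i : Fin (Nat.count (fun n => w n ∈ So) m) => projω So w i) := by
  induction m with
  | zero => simp [proj, Nat.count_zero]
  | succ m ih =>
    rw [List.ofFn_succ']
    by_cases hm : w m ∈ So
    · have hc : Nat.count (fun n => w n ∈ So) (m+1) =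
        Nat.count (fun n => w n ∈ So) m + 1 := by
        rw [Nat.count_succ, if_pos hm]
      rw [hc, List.ofFn_succ']
      simp only [proj, List.concat_eq_append, List.filter_append,
        Fin.coe_castSucc, Fin.val_last] at *
      rw [ih]
      congr 1
      have : projω So w (Nat.count (fun n => w n ∈ So) m) = w m := by
        rw [projω, Nat.nth_count (p := fun n => w n ∈ So) hm]
      simp [hm, this]
    · have hc : Nat.count (fun n => w n ∈ So) (m+1) =
        Nat.count (fun n => w n ∈ So) m := by
        rw [Nat.count_succ, if_neg hm, Nat.add_zero]
      rw [hc]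
      simp only [proj, List.concat_eq_append, List.filter_append,
        Fin.coe_castSucc, Fin.val_last] at *
      rw [ih]
      simp [hm]
end Aux

/-- Positions at or beyond `u.length` in `catInf u v` come from `v`. -/
lemma catInf_ge {A : Type*} (u : List A) (v : ℕ → A) {n : ℕ} (h : u.length ≤ n) :
    catInf u v n = v (n - u.length) := by
  simp [catInf, Nat.not_lt.mpr h]

/-- `projω` of `catInf u v` with observable `v` is `catInf (proj u) v`. -/
lemma projω_catInf {A : Type*} (So : Set A) [DecidablePred (· ∈ So)]
    (u : List A) (v : ℕ → A) (hv : ∀ n, v n ∈ So) :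
    projω So (catInf u v) = catInf (proj So u) v := by
  set x := catInf u v with hx
  set P : ℕ → Prop := fun n => x n ∈ So with hP
  set k := (proj So u).length with hk
  have hofn : (List.ofFn fun i : Fin u.length => x i) = u := by
    apply List.ext_getElem (by simp)
    intro n h1 h2
    simp only [List.getElem_ofFn, hx, catInf]
    rw [dif_pos h2]
    rfl
  have hP' : ∀ n, u.length ≤ n → P n := by
    intro n hn
    show catInf u v n ∈ So
    rw [catInf_ge u v hn]
    exact hv _
  have hck : Nat.count P u.length = k := by
    have := congrArg List.length (proj_ofFn So x u.length)
    rw [hofn] at this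
    simpa [hk] using this.symm
  have hcount : ∀ j, Nat.count P (u.length + j) = k + j := by
    intro j
    induction j with
    | zero => simpa using hck
    | succ j ih =>
      rw [← Nat.add_assoc, Nat.count_succ, ih, if_pos (hP' _ (Nat.le_add_right _ _))]
      omega
  have hnth : ∀ j, Nat.nth P (k + j) = u.length + j := by
    intro j
    rw [← hcount j]
    exact Nat.nth_count (hP' _ (Nat.le_add_right _ _))
  funext i
  by_cases hi : i < k
  · have h1 := proj_ofFn So x u.length
    rw [hofn] at h1
    simp only [catInf, dif_pos (show i < (proj So u).length from hi)]
    rw [List.get_of_eq h1, List.get_ofFn]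
    rfl
  · push_neg at hi
    rw [catInf_ge _ _ hi]
    have : projω So x i = x (u.length + (i - k)) := by
      rw [projω]
      congr 1
      rw [← hnth (i - k), Nat.add_sub_cancel' hi]
    rw [this, hx, catInf_ge u v (Nat.le_add_right _ _), Nat.add_sub_cancel_left]




/-- untimed Lemma 2: with `Lωf = Lf · So^ω`,
`π(Lf) ∩ π(Pref(Lωnf)) = ∅ ↔ π(Lωf) ∩ π(Lωnf) = ∅`. -/
theorem finite_disjoint_iff_omega_disjoint {A : Type*} (So : Set A)
    [DecidablePred (· ∈ So)] (Lf : Set (List A)) (Lωnf : Set (ℕ → A))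
    (hObs : ∀ w ∈ Lωnf, {n | w n ∈ So}.Infinite) :
    (proj So '' Lf ∩ proj So '' Pref Lωnf = ∅) ↔
    (projω So '' {x | ∃ u ∈ Lf, ∃ v : ℕ → A, (∀ n, v n ∈ So) ∧ x = catInf u v} ∩
      projω So '' Lωnf = ∅) := by
  constructor
  · -- finite disjoint → ω disjoint
    intro h
    rw [Set.eq_empty_iff_forall_notMem] at h ⊢
    rintro y ⟨⟨x, ⟨u, hu, v, hv, rfl⟩, hyx⟩, ⟨w, hw, hyw⟩⟩
    set P : ℕ → Prop := fun n => w n ∈ So with hPdef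
    have hPinf : {n | P n}.Infinite := hObs w hw
    set k := (proj So u).length with hk
    obtain ⟨m, hm⟩ := Nat.surjective_count_of_infinite_setOf hPinf k
    set u' : List A := List.ofFn (fun i : Fin m => w i) with hu'
    have hu'P : u' ∈ Pref Lωnf := ⟨w, hw, fun i => by simp [hu']⟩
    have hxw : projω So (catInf u v) = projω So w := hyx.trans hyw.symm
    have hcat : projω So (catInf u v) = catInf (proj So u) v :=
      projω_catInf So u v hv
    have hproju : proj So u = List.ofFn (fun i : Fin k => projω So w i) := by
      apply List.ext_getElem (by simp [hk])
      intro n h1 h2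
      have : projω So w n = catInf (proj So u) v n := by
        rw [← hcat, hxw]
      simp only [List.getElem_ofFn]
      rw [this, catInf]
      rw [dif_pos h1]
      rfl
    have hproju' : proj So u' = List.ofFn (fun i : Fin k => projω So w i) := by
      rw [hu', proj_ofFn So w m]
      apply List.ext_getElem (by simp; exact hm)
      intro n h1 h2
      simp
    exact h (proj So u) ⟨⟨u, hu, rfl⟩, ⟨u', hu'P, (hproju'.trans hproju.symm)⟩⟩
  · -- ω disjoint → finite disjoint
    intro h
    rw [Set.eq_empty_iff_forall_notMem] at h ⊢
    rintro z ⟨⟨u, hu, rfl⟩, ⟨u', ⟨w, hw, hpre⟩, hz⟩⟩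
    set P : ℕ → Prop := fun n => w n ∈ So with hPdef
    have hPinf : {n | P n}.Infinite := hObs w hw
    have hofn : (List.ofFn fun i : Fin u'.length => w i) = u' := by
      apply List.ext_getElem (by simp)
      intro n h1 h2
      simp only [List.getElem_ofFn]
      exact (hpre ⟨n, h2⟩).symm
    set k := (proj So u').length with hk
    have hck : Nat.count P u'.length = k := by
      have := congrArg List.length (proj_ofFn So w u'.length)
      rw [hofn] at this
      simpa [hk] using this.symm
    set v : ℕ → A := fun j => w (Nat.nth P (k + j)) with hv
    have hvSo : ∀ j, v j ∈ So := fun j => Nat.nth_mem_of_infinite hPinf _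
    have hwcat : projω So w = catInf (proj So u') v := by
      funext i
      by_cases hi : i < k
      · have h1 := proj_ofFn So w u'.length
        rw [hofn] at h1
        rw [catInf, dif_pos (show i < (proj So u').length from hi)]
        rw [List.get_of_eq h1, List.get_ofFn]
        rfl
      · push_neg at hi
        rw [catInf_ge _ _ hi]
        show projω So w i = w (Nat.nth P (k + (i - k)))
        rw [Nat.add_sub_cancel' hi]
        rfl
    have hzeq : proj So u = proj So u' := hz.symm
    refine h (projω So w) ⟨⟨catInf u v, ⟨u, hu, v, hvSo, rfl⟩, ?_⟩, ⟨w, hw, rfl⟩⟩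
    rw [projω_catInf So u v hvSo, hzeq, hwcat]
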